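/- arXiv:1704.01354 — 2 statements merged into one kernel-verified Lean document; each statement's English description precedes it below -/
import Mathlib

section
/- Let μ₁ and μ₂ be Borel probability measures on Σ, let 0 < α ≤ 1 and suppose κ := κ_α(M,μ₁) < 1 and κ_α(M,μ₂) < 1. Let ν₁ and ν₂ be Borel probability measures on X that are stationary for L_{M,μ₁} and L_{M,μ₂} respectively (i.e. ∫ L_{M,μᵢ}φ dνᵢ = ∫ φ dνᵢ for all continuous φ). Then for every φ ∈ H_α(X): |∫_X φ dν₁ − ∫_X φ dν₂| ≤ (‖μ₁ − μ₂‖_TV/(1−κ)) · v_α(φ), where ‖μ₁ − μ₂‖_TV denotes the total variation norm of the signed measure μ₁ − μ₂. -/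
open MeasureTheory ENNReal

/-- The `α`-Hölder seminorm `v_α(φ) = diam(X)^α ⬝ sup_{x ≠ y} |φ x - φ y| / d(x,y)^α`,
valued in `ℝ≥0∞`. -/
noncomputable def eHolderSemi {X : Type*} [PseudoMetricSpace X] (α : ℝ) (φ : X → ℝ) : ℝ≥0∞ :=
  (EMetric.diam (Set.univ : Set X)) ^ α *
    ⨆ pq : { pq : X × X // pq.1 ≠ pq.2 },
      ENNReal.ofReal (|φ pq.val.1 - φ pq.val.2| / dist pq.val.1 pq.val.2 ^ α)

/-- The Markov (transfer) operator `(L_{M,μ} φ)(p) = ∫_Σ φ(M(x,p)) dμ(x)`. -/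
noncomputable def transferOp {S X : Type*} [MeasurableSpace S] (μ : Measure S)
    (M : S × X → X) (φ : X → ℝ) : X → ℝ :=
  fun p => ∫ x, φ (M (x, p)) ∂μ

/-- `κ_α(M,μ) = sup_{p ≠ q} ∫_Σ (d(M(x,p),M(x,q))/d(p,q))^α dμ(x)`. -/
noncomputable def kappaAlpha {S X : Type*} [MeasurableSpace S] [PseudoMetricSpace X]
    (μ : Measure S) (α : ℝ) (M : S × X → X) : ℝ≥0∞ :=
  ⨆ pq : { pq : X × X // pq.1 ≠ pq.2 },
    ∫⁻ x, ENNReal.ofReal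
      ((dist (M (x, pq.val.1)) (M (x, pq.val.2)) / dist pq.val.1 pq.val.2) ^ α) ∂μ

/-- The total variation norm `‖μ₁ − μ₂‖` of the difference of two finite measures. -/
noncomputable def tvNorm {S : Type*} [MeasurableSpace S]
    (μ₁ μ₂ : Measure S) [IsFiniteMeasure μ₁] [IsFiniteMeasure μ₂] : ℝ≥0∞ :=
  (μ₁.toSignedMeasure - μ₂.toSignedMeasure).totalVariation Set.univ

/-- A continuous function on a compact space is integrable w.r.t. any finite measure. -/
lemma contInt {Y : Type*} [MeasurableSpace Y] [TopologicalSpace Y] [CompactSpace Y]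
    [T2Space Y] [OpensMeasurableSpace Y] (ρ : Measure Y) [IsFiniteMeasure ρ]
    {f : Y → ℝ} (hf : Continuous f) : Integrable f ρ :=
  hf.integrable_of_hasCompactSupport (HasCompactSupport.of_compactSpace f)

lemma tvNorm_ne_top {S : Type*} [MeasurableSpace S] (μ₁ μ₂ : Measure S)
    [IsFiniteMeasure μ₁] [IsFiniteMeasure μ₂] : tvNorm μ₁ μ₂ ≠ ⊤ := by
  rw [tvNorm, SignedMeasure.totalVariation, Measure.add_apply]
  exact ENNReal.add_ne_top.2 ⟨measure_ne_top _ _, measure_ne_top _ _⟩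

/-- Integration against the difference of two finite measures is controlled by the
total variation norm times a uniform bound. -/
lemma tvBound {S : Type*} [MeasurableSpace S] (μ₁ μ₂ : Measure S)
    [IsFiniteMeasure μ₁] [IsFiniteMeasure μ₂] {g : S → ℝ} {B : ℝ}
    (hg : StronglyMeasurable g) (hB : ∀ x, |g x| ≤ B) :
    |∫ x, g x ∂μ₁ - ∫ x, g x ∂μ₂| ≤ (tvNorm μ₁ μ₂).toReal * B := by
  set s := μ₁.toSignedMeasure - μ₂.toSignedMeasure with hs
  set p := s.toJordanDecomposition.posPart with hp
  set n := s.toJordanDecomposition.negPart with hn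
  have hint : ∀ (ρ : Measure S) [IsFiniteMeasure ρ], Integrable g ρ := by
    intro ρ _
    exact (integrable_const B).mono' hg.aestronglyMeasurable
      (Filter.Eventually.of_forall (by simpa using hB))
  have h1 : p.toSignedMeasure - n.toSignedMeasure = s :=
    s.toSignedMeasure_toJordanDecomposition
  have h2 : μ₁ + n = μ₂ + p := by
    rw [← Measure.toSignedMeasure_eq_toSignedMeasure_iff,
      Measure.toSignedMeasure_add, Measure.toSignedMeasure_add]
    have h := sub_eq_sub_iff_add_eq_add.mp h1.symm
    rw [h, add_comm]
  have h3 : ∫ x, g x ∂μ₁ + ∫ x, g x ∂n = ∫ x, g x ∂μ₂ + ∫ x, g x ∂p := by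
    rw [← integral_add_measure (hint μ₁) (hint n), ← integral_add_measure (hint μ₂) (hint p), h2]
  have h4 : ∫ x, g x ∂μ₁ - ∫ x, g x ∂μ₂ = ∫ x, g x ∂p - ∫ x, g x ∂n := by linarith
  have hbp : |∫ x, g x ∂p| ≤ B * (p Set.univ).toReal := by
    simpa [Real.norm_eq_abs, Measure.real] using
      norm_integral_le_of_norm_le_const (μ := p) (f := g) (C := B)
        (Filter.Eventually.of_forall (by simpa [Real.norm_eq_abs] using hB))
  have hbn : |∫ x, g x ∂n| ≤ B * (n Set.univ).toReal := by
    simpa [Real.norm_eq_abs, Measure.real] using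
      norm_integral_le_of_norm_le_const (μ := n) (f := g) (C := B)
        (Filter.Eventually.of_forall (by simpa [Real.norm_eq_abs] using hB))
  have htv : (tvNorm μ₁ μ₂).toReal = (p Set.univ).toReal + (n Set.univ).toReal := by
    rw [tvNorm, SignedMeasure.totalVariation, Measure.add_apply,
      ENNReal.toReal_add (measure_ne_top _ _) (measure_ne_top _ _)]
  rw [h4, htv]
  calc |∫ x, g x ∂p - ∫ x, g x ∂n| ≤ |∫ x, g x ∂p| + |∫ x, g x ∂n| := abs_sub _ _
    _ ≤ B * (p Set.univ).toReal + B * (n Set.univ).toReal := add_le_add hbp hbn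
    _ = ((p Set.univ).toReal + (n Set.univ).toReal) * B := by ring

/-- If `κ := κ_α(M,μ₁) < 1` and `κ_α(M,μ₂) < 1`, and `ν₁`, `ν₂` are stationary
probability measures for `L_{M,μ₁}` and `L_{M,μ₂}` respectively, then for every
`φ ∈ H_α(X)`, `|∫ φ dν₁ − ∫ φ dν₂| ≤ (‖μ₁ − μ₂‖_TV/(1−κ)) · v_α(φ)`. -/
theorem stmt10 {S X : Type*} [MetricSpace S] [CompactSpace S]
    [MeasurableSpace S] [BorelSpace S]
    [MetricSpace X] [CompactSpace X] [MeasurableSpace X] [BorelSpace X]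
    (μ₁ μ₂ : Measure S) [IsProbabilityMeasure μ₁] [IsProbabilityMeasure μ₂]
    (M : S × X → X) (hM : Continuous M)
    (α : ℝ) (hα0 : 0 < α) (hα1 : α ≤ 1)
    (hκ₁ : kappaAlpha μ₁ α M < 1) (hκ₂ : kappaAlpha μ₂ α M < 1)
    (ν₁ ν₂ : Measure X) (hν₁ : IsProbabilityMeasure ν₁) (hν₂ : IsProbabilityMeasure ν₂)
    (hstat₁ : ∀ φ : C(X, ℝ), ∫ p, transferOp μ₁ M (⇑φ) p ∂ν₁ = ∫ p, φ p ∂ν₁)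
    (hstat₂ : ∀ φ : C(X, ℝ), ∫ p, transferOp μ₂ M (⇑φ) p ∂ν₂ = ∫ p, φ p ∂ν₂)
    (φ : X → ℝ) (hφc : Continuous φ) (hφ : eHolderSemi α φ < ⊤) :
    ENNReal.ofReal |∫ p, φ p ∂ν₁ - ∫ p, φ p ∂ν₂| ≤
      (tvNorm μ₁ μ₂ / (1 - kappaAlpha μ₁ α M)) * eHolderSemi α φ := by
  -- Nonemptiness
  have hXne : Nonempty X := by
    by_contra h
    rw [not_nonempty_iff] at h
    have h1 : ν₁ Set.univ = 1 := measure_univ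
    rw [Set.univ_eq_empty_iff.mpr h, measure_empty] at h1
    exact zero_ne_one h1
  have hSne : Nonempty S := by
    by_contra h
    rw [not_nonempty_iff] at h
    have h1 : μ₁ Set.univ = 1 := measure_univ
    rw [Set.univ_eq_empty_iff.mpr h, measure_empty] at h1
    exact zero_ne_one h1
  set ed := EMetric.diam (Set.univ : Set X) with hed
  set H := ⨆ pq : { pq : X × X // pq.1 ≠ pq.2 },
      ENNReal.ofReal (|φ pq.val.1 - φ pq.val.2| / dist pq.val.1 pq.val.2 ^ α) with hH
  have hsemi : eHolderSemi α φ = ed ^ α * H := rfl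
  -- Degenerate case: X a single point
  by_cases hed0 : ed = 0
  · have hsub : ∀ y z : X, y = z := by
      intro y z
      have h1 := EMetric.edist_le_diam_of_mem (Set.mem_univ y) (Set.mem_univ z)
      rw [show Metric.ediam (Set.univ : Set X) = ed from rfl, hed0] at h1
      exact edist_eq_zero.mp (le_antisymm h1 zero_le')
    obtain ⟨x0⟩ := hXne
    have hconst : φ = fun _ => φ x0 := funext fun y => by rw [hsub y x0]
    have e1 : ∫ p, φ p ∂ν₁ = φ x0 := by rw [hconst]; simp [measure_univ]
    have e2 : ∫ p, φ p ∂ν₂ = φ x0 := by rw [hconst]; simp [measure_univ]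
    rw [e1, e2, sub_self, abs_zero, ENNReal.ofReal_zero]
    exact zero_le'
  -- Main case
  have hedt : ed ≠ ⊤ := (isCompact_univ.isBounded).ediam_ne_top
  have hedα0 : ed ^ α ≠ 0 := by
    rw [Ne, ENNReal.rpow_eq_zero_iff]
    rintro (⟨h, -⟩ | ⟨h, hneg⟩)
    · exact hed0 h
    · exact absurd hneg (not_lt.mpr hα0.le)
  have hedαt : ed ^ α ≠ ⊤ := ENNReal.rpow_ne_top_of_nonneg hα0.le hedt
  have hHtop : H ≠ ⊤ := by
    intro h
    have hφ' : ed ^ α * H < ⊤ := hφ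
    rw [h, ENNReal.mul_top hedα0] at hφ'
    exact lt_irrefl ⊤ hφ'
  set C := H.toReal with hC
  have hC0 : 0 ≤ C := ENNReal.toReal_nonneg
  set D := ed.toReal with hD
  have hD0 : 0 ≤ D := ENNReal.toReal_nonneg
  set K := (kappaAlpha μ₁ α M).toReal with hK
  have hK0 : 0 ≤ K := ENNReal.toReal_nonneg
  have hK1 : K < 1 := by
    have := (ENNReal.toReal_lt_toReal hκ₁.ne_top ENNReal.one_ne_top).mpr hκ₁
    simpa using this
  set T := (tvNorm μ₁ μ₂).toReal with hT
  have hT0 : 0 ≤ T := ENNReal.toReal_nonneg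
  have hdD : ∀ y z : X, dist y z ≤ D := fun y z =>
    Metric.dist_le_diam_of_mem isCompact_univ.isBounded (Set.mem_univ y) (Set.mem_univ z)
  -- Hölder property of φ with constant C
  have hHolφ : ∀ y z : X, |φ y - φ z| ≤ C * dist y z ^ α := by
    intro y z
    by_cases hyz : y = z
    · subst hyz; simp [Real.zero_rpow hα0.ne']
    · have h1 : ENNReal.ofReal (|φ y - φ z| / dist y z ^ α) ≤ H :=
        le_iSup (fun pq : { pq : X × X // pq.1 ≠ pq.2 } =>
          ENNReal.ofReal (|φ pq.val.1 - φ pq.val.2| / dist pq.val.1 pq.val.2 ^ α)) ⟨(y, z), hyz⟩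
      have h2 : |φ y - φ z| / dist y z ^ α ≤ C := by
        have h3 := ENNReal.toReal_mono hHtop h1
        rwa [ENNReal.toReal_ofReal
          (div_nonneg (abs_nonneg _) (Real.rpow_nonneg dist_nonneg _))] at h3
      have hdz : (0 : ℝ) < dist y z ^ α := Real.rpow_pos_of_pos (dist_pos.mpr hyz) α
      calc |φ y - φ z| = |φ y - φ z| / dist y z ^ α * dist y z ^ α := by
            field_simp
        _ ≤ C * dist y z ^ α := mul_le_mul_of_nonneg_right h2 hdz.le
  -- continuity helpers
  have hMp : ∀ p : X, Continuous fun x : S => M (x, p) := fun p =>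
    hM.comp (continuous_id.prodMk continuous_const)
  have hMx : ∀ x : S, Continuous fun p : X => M (x, p) := fun x =>
    hM.comp (continuous_const.prodMk continuous_id)
  have hbd : ∀ ψ : X → ℝ, Continuous ψ → ∃ B, ∀ y, |ψ y| ≤ B := by
    intro ψ hψ
    obtain ⟨y₀, hy₀⟩ := hψ.abs.exists_forall_ge (by
      rw [Filter.cocompact_eq_bot]; exact Filter.tendsto_bot)
    exact ⟨|ψ y₀|, fun y => hy₀ y⟩
  have hLcont : ∀ (μ : Measure S), IsFiniteMeasure μ → ∀ ψ : X → ℝ, Continuous ψ →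
      Continuous (transferOp μ M ψ) := by
    intro μ hfin ψ hψ
    obtain ⟨B, hB⟩ := hbd ψ hψ
    exact continuous_of_dominated (fun p => (hψ.comp (hMp p)).aestronglyMeasurable)
      (fun p => Filter.Eventually.of_forall fun x => by
        simpa [Real.norm_eq_abs] using hB (M (x, p)))
      (integrable_const B)
      (Filter.Eventually.of_forall fun x => hψ.comp (hMx x))
  -- κ bound in real form
  have hκint : ∀ p q : X, p ≠ q →
      ∫ x, (dist (M (x, p)) (M (x, q)) / dist p q) ^ α ∂μ₁ ≤ K := by
    intro p q hpq
    have hfc : Continuous fun x : S => (dist (M (x, p)) (M (x, q)) / dist p q) ^ α :=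
      (Real.continuous_rpow_const hα0.le).comp (((hMp p).dist (hMp q)).div_const _)
    have hfnn : ∀ x, 0 ≤ (dist (M (x, p)) (M (x, q)) / dist p q) ^ α := fun x =>
      Real.rpow_nonneg (div_nonneg dist_nonneg dist_nonneg) α
    have hfi : Integrable (fun x : S => (dist (M (x, p)) (M (x, q)) / dist p q) ^ α) μ₁ :=
      contInt μ₁ hfc
    have h1 : ENNReal.ofReal (∫ x, (dist (M (x, p)) (M (x, q)) / dist p q) ^ α ∂μ₁) =
        ∫⁻ x, ENNReal.ofReal ((dist (M (x, p)) (M (x, q)) / dist p q) ^ α) ∂μ₁ :=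
      ofReal_integral_eq_lintegral_ofReal hfi (Filter.Eventually.of_forall hfnn)
    have h2 : (∫⁻ x, ENNReal.ofReal ((dist (M (x, p)) (M (x, q)) / dist p q) ^ α) ∂μ₁) ≤
        kappaAlpha μ₁ α M :=
      le_iSup (fun pq : { pq : X × X // pq.1 ≠ pq.2 } =>
        ∫⁻ x, ENNReal.ofReal
          ((dist (M (x, pq.val.1)) (M (x, pq.val.2)) / dist pq.val.1 pq.val.2) ^ α) ∂μ₁)
        ⟨(p, q), hpq⟩
    have h3 : ENNReal.ofReal (∫ x, (dist (M (x, p)) (M (x, q)) / dist p q) ^ α ∂μ₁) ≤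
        kappaAlpha μ₁ α M := h1 ▸ h2
    calc ∫ x, (dist (M (x, p)) (M (x, q)) / dist p q) ^ α ∂μ₁
        = (ENNReal.ofReal (∫ x, (dist (M (x, p)) (M (x, q)) / dist p q) ^ α ∂μ₁)).toReal :=
          (ENNReal.toReal_ofReal (integral_nonneg hfnn)).symm
      _ ≤ K := ENNReal.toReal_mono hκ₁.ne_top h3
  -- contraction of the Hölder constant under the transfer operator
  have hcontract : ∀ ψ : X → ℝ, Continuous ψ → ∀ C' : ℝ, 0 ≤ C' →
      (∀ y z, |ψ y - ψ z| ≤ C' * dist y z ^ α) →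
      ∀ p q, |transferOp μ₁ M ψ p - transferOp μ₁ M ψ q| ≤ C' * K * dist p q ^ α := by
    intro ψ hψ C' hC' hHol p q
    by_cases hpq : p = q
    · subst hpq; simp [Real.zero_rpow hα0.ne']
    · have hdpq : (0 : ℝ) < dist p q := dist_pos.mpr hpq
      have hint1 : Integrable (fun x => ψ (M (x, p))) μ₁ := contInt μ₁ (hψ.comp (hMp p))
      have hint2 : Integrable (fun x => ψ (M (x, q))) μ₁ := contInt μ₁ (hψ.comp (hMp q))
      have hint3 : Integrable (fun x => dist (M (x, p)) (M (x, q)) ^ α) μ₁ :=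
        contInt μ₁ ((Real.continuous_rpow_const hα0.le).comp ((hMp p).dist (hMp q)))
      have step1 : |transferOp μ₁ M ψ p - transferOp μ₁ M ψ q| =
          |∫ x, (ψ (M (x, p)) - ψ (M (x, q))) ∂μ₁| := by
        rw [show transferOp μ₁ M ψ p - transferOp μ₁ M ψ q =
          ∫ x, (ψ (M (x, p)) - ψ (M (x, q))) ∂μ₁ from (integral_sub hint1 hint2).symm]
      rw [step1]
      calc |∫ x, (ψ (M (x, p)) - ψ (M (x, q))) ∂μ₁|
          ≤ ∫ x, |ψ (M (x, p)) - ψ (M (x, q))| ∂μ₁ := by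
            simpa [Real.norm_eq_abs] using norm_integral_le_integral_norm
              (μ := μ₁) (f := fun x => ψ (M (x, p)) - ψ (M (x, q)))
        _ ≤ ∫ x, C' * dist (M (x, p)) (M (x, q)) ^ α ∂μ₁ :=
            integral_mono (hint1.sub hint2).abs (hint3.const_mul C') fun x => hHol _ _
        _ = C' * ((∫ x, (dist (M (x, p)) (M (x, q)) / dist p q) ^ α ∂μ₁) * dist p q ^ α) := by
            rw [integral_const_mul, ← integral_mul_const]
            congr 1
            apply integral_congr_ae
            apply Filter.Eventually.of_forall
            intro x
            simp only [Real.div_rpow dist_nonneg hdpq.le,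
              div_mul_cancel₀ _ (Real.rpow_pos_of_pos hdpq α).ne']
        _ ≤ C' * (K * dist p q ^ α) := by
            apply mul_le_mul_of_nonneg_left _ hC'
            exact mul_le_mul_of_nonneg_right (hκint p q hpq) (Real.rpow_nonneg hdpq.le α)
        _ = C' * K * dist p q ^ α := by ring
  -- pointwise total variation bound for the difference of the transfer operators
  have hdiff : ∀ ψ : X → ℝ, Continuous ψ → ∀ B : ℝ, (∀ y z, |ψ y - ψ z| ≤ B) →
      ∀ p, |transferOp μ₁ M ψ p - transferOp μ₂ M ψ p| ≤ T * B := by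
    intro ψ hψ B hB p
    obtain ⟨x₀⟩ := hSne
    have hgc : Continuous (fun x : S => ψ (M (x, p)) - ψ (M (x₀, p))) :=
      (hψ.comp (hMp p)).sub continuous_const
    have h₁ : ∀ (μ : Measure S), IsProbabilityMeasure μ →
        ∫ x, (ψ (M (x, p)) - ψ (M (x₀, p))) ∂μ = transferOp μ M ψ p - ψ (M (x₀, p)) := by
      intro μ hμ
      have hi : Integrable (fun x => ψ (M (x, p))) μ := contInt μ (hψ.comp (hMp p))
      rw [integral_sub hi (integrable_const _), integral_const]
      simp [measure_univ, transferOp]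
    have h₂ := tvBound μ₁ μ₂ (g := fun x : S => ψ (M (x, p)) - ψ (M (x₀, p)))
      hgc.stronglyMeasurable (fun x => hB _ _)
    rw [h₁ μ₁ inferInstance, h₁ μ₂ inferInstance] at h₂
    simpa [sub_sub_sub_cancel_right] using h₂
  -- integrated total variation bound
  have hdiff2 : ∀ ψ : X → ℝ, Continuous ψ → ∀ B : ℝ, (∀ y z, |ψ y - ψ z| ≤ B) →
      |∫ p, transferOp μ₁ M ψ p ∂ν₂ - ∫ p, transferOp μ₂ M ψ p ∂ν₂| ≤ T * B := by
    intro ψ hψ B hB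
    rw [← integral_sub (contInt ν₂ (hLcont μ₁ inferInstance ψ hψ))
      (contInt ν₂ (hLcont μ₂ inferInstance ψ hψ))]
    simpa [Real.norm_eq_abs, measure_univ] using
      norm_integral_le_of_norm_le_const (μ := ν₂) (C := T * B)
        (f := fun p => transferOp μ₁ M ψ p - transferOp μ₂ M ψ p)
        (Filter.Eventually.of_forall fun p => by
          simpa [Real.norm_eq_abs] using hdiff ψ hψ B hB p)
  -- oscillation bound for the difference of the stationary integrals
  have hosc : ∀ ψ : X → ℝ, Continuous ψ → ∀ B : ℝ, (∀ y z, |ψ y - ψ z| ≤ B) →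
      |∫ y, ψ y ∂ν₁ - ∫ y, ψ y ∂ν₂| ≤ B := by
    intro ψ hψ B hB
    have key : ∀ y, |(∫ x, ψ x ∂ν₁) - ψ y| ≤ B := by
      intro y
      have h1 : (∫ x, ψ x ∂ν₁) - ψ y = ∫ x, (ψ x - ψ y) ∂ν₁ := by
        rw [integral_sub (contInt ν₁ hψ) (integrable_const _), integral_const]
        simp [measure_univ]
      rw [h1]
      simpa [Real.norm_eq_abs, measure_univ] using
        norm_integral_le_of_norm_le_const (μ := ν₁) (C := B)
          (f := fun x => ψ x - ψ y)
          (Filter.Eventually.of_forall fun x => by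
            simpa [Real.norm_eq_abs] using hB x y)
    have h2 : (∫ x, ψ x ∂ν₁) - ∫ y, ψ y ∂ν₂ = ∫ y, ((∫ x, ψ x ∂ν₁) - ψ y) ∂ν₂ := by
      rw [integral_sub (integrable_const _) (contInt ν₂ hψ), integral_const]
      simp [measure_univ]
    rw [h2]
    simpa [Real.norm_eq_abs, measure_univ] using
      norm_integral_le_of_norm_le_const (μ := ν₂) (C := B)
        (f := fun y => (∫ x, ψ x ∂ν₁) - ψ y)
        (Filter.Eventually.of_forall fun y => by
          simpa [Real.norm_eq_abs] using key y)
  -- the main induction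
  have key : ∀ n : ℕ, ∀ ψ : X → ℝ, Continuous ψ → ∀ C' : ℝ, 0 ≤ C' →
      (∀ y z, |ψ y - ψ z| ≤ C' * dist y z ^ α) →
      |∫ y, ψ y ∂ν₁ - ∫ y, ψ y ∂ν₂| ≤
        T * (C' * D ^ α) * (∑ k ∈ Finset.range n, K ^ k) + K ^ n * (C' * D ^ α) := by
    intro n
    induction n with
    | zero =>
      intro ψ hψ C' hC' hHol
      simp only [Finset.range_zero, Finset.sum_empty, mul_zero, zero_add, pow_zero, one_mul]
      apply hosc ψ hψ
      intro y z
      calc |ψ y - ψ z| ≤ C' * dist y z ^ α := hHol y z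
        _ ≤ C' * D ^ α := mul_le_mul_of_nonneg_left
            (Real.rpow_le_rpow dist_nonneg (hdD y z) hα0.le) hC'
    | succ n IH =>
      intro ψ hψ C' hC' hHol
      have hoscψ : ∀ y z, |ψ y - ψ z| ≤ C' * D ^ α := by
        intro y z
        calc |ψ y - ψ z| ≤ C' * dist y z ^ α := hHol y z
          _ ≤ C' * D ^ α := mul_le_mul_of_nonneg_left
              (Real.rpow_le_rpow dist_nonneg (hdD y z) hα0.le) hC'
      have e1 : ∫ y, ψ y ∂ν₁ = ∫ p, transferOp μ₁ M ψ p ∂ν₁ := (hstat₁ ⟨ψ, hψ⟩).symm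
      have e2 : ∫ y, ψ y ∂ν₂ = ∫ p, transferOp μ₂ M ψ p ∂ν₂ := (hstat₂ ⟨ψ, hψ⟩).symm
      have hIH := IH (transferOp μ₁ M ψ) (hLcont μ₁ inferInstance ψ hψ) (C' * K)
        (mul_nonneg hC' hK0) (hcontract ψ hψ C' hC' hHol)
      have h2 := hdiff2 ψ hψ (C' * D ^ α) hoscψ
      calc |∫ y, ψ y ∂ν₁ - ∫ y, ψ y ∂ν₂|
          = |(∫ p, transferOp μ₁ M ψ p ∂ν₁ - ∫ p, transferOp μ₁ M ψ p ∂ν₂) +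
              (∫ p, transferOp μ₁ M ψ p ∂ν₂ - ∫ p, transferOp μ₂ M ψ p ∂ν₂)| := by
            rw [e1, e2]; congr 1; ring
        _ ≤ |∫ p, transferOp μ₁ M ψ p ∂ν₁ - ∫ p, transferOp μ₁ M ψ p ∂ν₂| +
              |∫ p, transferOp μ₁ M ψ p ∂ν₂ - ∫ p, transferOp μ₂ M ψ p ∂ν₂| := abs_add_le _ _
        _ ≤ (T * ((C' * K) * D ^ α) * (∑ k ∈ Finset.range n, K ^ k) +
              K ^ n * ((C' * K) * D ^ α)) + T * (C' * D ^ α) := add_le_add hIH h2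
        _ = T * (C' * D ^ α) * (∑ k ∈ Finset.range (n + 1), K ^ k) +
              K ^ (n + 1) * (C' * D ^ α) := by
            rw [geom_sum_succ]
            ring
  -- pass to the limit
  have h1K : (0 : ℝ) < 1 - K := by linarith
  have hfin : |∫ p, φ p ∂ν₁ - ∫ p, φ p ∂ν₂| ≤ T * (C * D ^ α) * (1 - K)⁻¹ := by
    have hmain : ∀ n : ℕ, |∫ p, φ p ∂ν₁ - ∫ p, φ p ∂ν₂| ≤
        T * (C * D ^ α) * (1 - K)⁻¹ + K ^ n * (C * D ^ α) := by
      intro n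
      have h := key n φ hφc C hC0 hHolφ
      have hsum : (∑ k ∈ Finset.range n, K ^ k) ≤ (1 - K)⁻¹ := by
        have h5 := (summable_geometric_of_lt_one hK0 hK1).sum_le_tsum (Finset.range n)
          (fun i _ => pow_nonneg hK0 i)
        rwa [tsum_geometric_of_lt_one hK0 hK1] at h5
      have h6 : T * (C * D ^ α) * (∑ k ∈ Finset.range n, K ^ k) ≤
          T * (C * D ^ α) * (1 - K)⁻¹ :=
        mul_le_mul_of_nonneg_left hsum
          (mul_nonneg hT0 (mul_nonneg hC0 (Real.rpow_nonneg hD0 α)))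
      linarith
    have hlim : Filter.Tendsto
        (fun n : ℕ => T * (C * D ^ α) * (1 - K)⁻¹ + K ^ n * (C * D ^ α))
        Filter.atTop (nhds (T * (C * D ^ α) * (1 - K)⁻¹)) := by
      have h0 : Filter.Tendsto (fun n : ℕ => K ^ n * (C * D ^ α)) Filter.atTop (nhds 0) := by
        simpa using (tendsto_pow_atTop_nhds_zero_of_lt_one hK0 hK1).mul_const (C * D ^ α)
      simpa using tendsto_const_nhds.add h0
    exact ge_of_tendsto' hlim hmain
  -- conversion to `ℝ≥0∞`
  have h1κt : (1 : ℝ≥0∞) - kappaAlpha μ₁ α M ≠ ⊤ :=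
    ne_top_of_le_ne_top ENNReal.one_ne_top tsub_le_self
  have hsubK : (1 : ℝ) - K = ((1 : ℝ≥0∞) - kappaAlpha μ₁ α M).toReal := by
    rw [ENNReal.toReal_sub_of_le hκ₁.le ENNReal.one_ne_top, ENNReal.toReal_one]
  calc ENNReal.ofReal |∫ p, φ p ∂ν₁ - ∫ p, φ p ∂ν₂|
      ≤ ENNReal.ofReal (T * (C * D ^ α) * (1 - K)⁻¹) := ENNReal.ofReal_le_ofReal hfin
    _ = tvNorm μ₁ μ₂ * (H * ed ^ α) * (1 - kappaAlpha μ₁ α M)⁻¹ := by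
        rw [ENNReal.ofReal_mul (mul_nonneg hT0 (mul_nonneg hC0 (Real.rpow_nonneg hD0 α))),
          ENNReal.ofReal_mul hT0, ENNReal.ofReal_mul hC0,
          ENNReal.ofReal_inv_of_pos h1K, hsubK,
          ENNReal.ofReal_toReal h1κt, hT, ENNReal.ofReal_toReal (tvNorm_ne_top μ₁ μ₂),
          hC, ENNReal.ofReal_toReal hHtop,
          show D ^ α = (ed ^ α).toReal from by rw [hD, ENNReal.toReal_rpow],
          ENNReal.ofReal_toReal hedαt]
    _ = (tvNorm μ₁ μ₂ / (1 - kappaAlpha μ₁ α M)) * eHolderSemi α φ := by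
        rw [hsemi, div_eq_mul_inv]
        ring
end

section
/- Let M_1,…,M_k ∈ SL(2,ℝ) act linearly on the Euclidean plane ℝ², let p_1,…,p_k ≥ 0 with Σ p_j = 1, let 0 < α < 1, and let x, v ∈ ℝ² be orthonormal vectors. Define H : ℝ → ℝ by H(t) := Σ_{j=1}^k p_j ‖M_j(cos t · x + sin t · v)‖^{−2α}. Then H is differentiable and |H′(t)| ≤ 2α · (max_{1≤j≤k} ‖M_j‖)^{2(1+α)} for every t ∈ ℝ, where ‖M_j‖ denotes the operator norm of M_j on ℝ². -/
open scoped RealInnerProductSpace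

/-- The linear action of a matrix in `SL(2,ℝ)` on the Euclidean plane. -/
noncomputable def slAct (M : Matrix.SpecialLinearGroup (Fin 2) ℝ)
    (x : EuclideanSpace ℝ (Fin 2)) : EuclideanSpace ℝ (Fin 2) :=
  Matrix.toEuclideanLin (M : Matrix (Fin 2) (Fin 2) ℝ) x

/-- The operator norm (w.r.t. the Euclidean norm) of a matrix in `SL(2,ℝ)`. -/
noncomputable def slOpNorm (M : Matrix.SpecialLinearGroup (Fin 2) ℝ) : ℝ :=
  ‖LinearMap.toContinuousLinearMap (Matrix.toEuclideanLin (M : Matrix (Fin 2) (Fin 2) ℝ))‖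

lemma slAct_apply' (M : Matrix.SpecialLinearGroup (Fin 2) ℝ) (y : EuclideanSpace ℝ (Fin 2)) (i : Fin 2) :
    slAct M y i = (M : Matrix (Fin 2) (Fin 2) ℝ) i 0 * y 0 + (M : Matrix (Fin 2) (Fin 2) ℝ) i 1 * y 1 := by
  fin_cases i <;> simp [slAct, Matrix.toEuclideanLin_apply, Matrix.mulVec, dotProduct, Fin.sum_univ_two]

lemma eu_norm_sq' (y : EuclideanSpace ℝ (Fin 2)) : ‖y‖^2 = y 0 ^2 + y 1 ^2 := by
  rw [EuclideanSpace.norm_eq, Real.sq_sqrt (by positivity)]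
  simp [Fin.sum_univ_two, sq_abs]

lemma cross_le' (a b : EuclideanSpace ℝ (Fin 2)) :
    |a 0 * b 1 - a 1 * b 0| ≤ ‖a‖ * ‖b‖ := by
  have h2 : (a 0 * b 1 - a 1 * b 0)^2 ≤ (‖a‖ * ‖b‖)^2 := by
    rw [mul_pow, eu_norm_sq', eu_norm_sq']; nlinarith [sq_nonneg (a 0 * b 0 + a 1 * b 1)]
  rw [abs_le]; constructor <;>
    nlinarith [abs_nonneg (a 0 * b 1 - a 1 * b 0), mul_nonneg (norm_nonneg a) (norm_nonneg b)]

lemma slAct_eq_clm' (M : Matrix.SpecialLinearGroup (Fin 2) ℝ) (y : EuclideanSpace ℝ (Fin 2)) :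
    slAct M y = LinearMap.toContinuousLinearMap (Matrix.toEuclideanLin (M : Matrix (Fin 2) (Fin 2) ℝ)) y := rfl

lemma slAct_le' (M : Matrix.SpecialLinearGroup (Fin 2) ℝ) (y : EuclideanSpace ℝ (Fin 2)) :
    ‖slAct M y‖ ≤ slOpNorm M * ‖y‖ := by
  rw [slAct_eq_clm']
  exact ContinuousLinearMap.le_opNorm _ y

lemma sl_key' (M : Matrix.SpecialLinearGroup (Fin 2) ℝ) (u : EuclideanSpace ℝ (Fin 2))
    (hu : ‖u‖ = 1) : 1 ≤ slOpNorm M * ‖slAct M u‖ := by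
  set w : EuclideanSpace ℝ (Fin 2) := (WithLp.equiv 2 (Fin 2 → ℝ)).symm ![-(u 1), u 0] with hw
  have hw0 : w 0 = -(u 1) := rfl
  have hw1 : w 1 = u 0 := rfl
  have hwnorm : ‖w‖ = 1 := by
    have h1 := eu_norm_sq' w
    have h2 := eu_norm_sq' u
    rw [hw0, hw1] at h1
    rw [hu] at h2
    nlinarith [norm_nonneg w]
  have hdet : (M : Matrix (Fin 2) (Fin 2) ℝ).det = 1 := M.prop
  rw [Matrix.det_fin_two] at hdet
  have hcross : (slAct M u) 0 * (slAct M w) 1 - (slAct M u) 1 * (slAct M w) 0 = 1 := by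
    simp only [slAct_apply', hw0, hw1]
    have h2 := eu_norm_sq' u
    rw [hu] at h2
    ring_nf
    ring_nf at hdet h2
    nlinarith [hdet, h2]
  have h1 : (1:ℝ) ≤ ‖slAct M u‖ * ‖slAct M w‖ := by
    calc (1:ℝ) = |(slAct M u) 0 * (slAct M w) 1 - (slAct M u) 1 * (slAct M w) 0| := by
          rw [hcross]; simp
      _ ≤ _ := cross_le' _ _
  calc (1:ℝ) ≤ ‖slAct M u‖ * ‖slAct M w‖ := h1
    _ ≤ ‖slAct M u‖ * (slOpNorm M * ‖w‖) :=
        mul_le_mul_of_nonneg_left (slAct_le' M w) (norm_nonneg _)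
    _ = slOpNorm M * ‖slAct M u‖ := by rw [hwnorm]; ring

lemma combo_norm' (x v : EuclideanSpace ℝ (Fin 2)) (hx : ‖x‖ = 1) (hv : ‖v‖ = 1)
    (hxv : ⟪x, v⟫ = 0) (a b : ℝ) (hab : a^2 + b^2 = 1) : ‖a • x + b • v‖ = 1 := by
  have h : ‖a • x + b • v‖^2 = 1 := by
    rw [norm_add_sq_real, real_inner_smul_left, real_inner_smul_right, hxv,
      norm_smul, norm_smul, hx, hv]
    simp [sq_abs]
    nlinarith [sq_abs a, sq_abs b]
  nlinarith [norm_nonneg (a • x + b • v)]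

/-- The function `H(t) = Σ_j p_j ‖M_j(cos t · x + sin t · v)‖^{−2α}`, for orthonormal
`x, v`, is differentiable with `|H′(t)| ≤ 2α (max_j ‖M_j‖)^{2(1+α)}`. -/
theorem stmt19 {k : ℕ} (hk : 0 < k)
    (M : Fin k → Matrix.SpecialLinearGroup (Fin 2) ℝ)
    (p : Fin k → ℝ) (hp : ∀ j, 0 ≤ p j) (hpsum : ∑ j : Fin k, p j = 1)
    (α : ℝ) (hα0 : 0 < α) (hα1 : α < 1)
    (x v : EuclideanSpace ℝ (Fin 2)) (hx : ‖x‖ = 1) (hv : ‖v‖ = 1) (hxv : ⟪x, v⟫ = 0)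
    (H : ℝ → ℝ)
    (hH : H = fun t =>
      ∑ j : Fin k, p j * ‖slAct (M j) (Real.cos t • x + Real.sin t • v)‖ ^ (-(2 * α))) :
    Differentiable ℝ H ∧
      ∀ t : ℝ, |deriv H t| ≤ 2 * α * (⨆ j : Fin k, slOpNorm (M j)) ^ (2 * (1 + α)) := by
  haveI : Nonempty (Fin k) := ⟨⟨0, hk⟩⟩
  set c : ℝ → EuclideanSpace ℝ (Fin 2) := fun s => Real.cos s • x + Real.sin s • v with hc_def
  set d : ℝ → EuclideanSpace ℝ (Fin 2) := fun s => (-Real.sin s) • x + Real.cos s • v with hd_def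
  have hcnorm : ∀ s, ‖c s‖ = 1 := fun s =>
    combo_norm' x v hx hv hxv _ _ (by rw [← Real.cos_sq_add_sin_sq s])
  have hdnorm : ∀ s, ‖d s‖ = 1 := fun s =>
    combo_norm' x v hx hv hxv _ _ (by rw [← Real.sin_sq_add_cos_sq s]; ring)
  set F : Fin k → ℝ → EuclideanSpace ℝ (Fin 2) := fun j s => slAct (M j) (c s) with hF_def
  set N : Fin k → ℝ := fun j => slOpNorm (M j) with hN_def
  -- positivity facts
  have hkey : ∀ j s, 1 ≤ N j * ‖F j s‖ := fun j s => sl_key' (M j) (c s) (hcnorm s)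
  have hNpos : ∀ j, 0 < N j := by
    intro j
    nlinarith [hkey j 0, norm_nonneg (F j 0), slAct_le' (M j) (c 0), hcnorm 0]
  have hfpos : ∀ j s, 0 < ‖F j s‖ := by
    intro j s
    nlinarith [hkey j s, norm_nonneg (F j s), hNpos j]
  have hfinv : ∀ j s, ‖F j s‖⁻¹ ≤ N j := by
    intro j s
    rw [inv_le_iff_one_le_mul₀ (hfpos j s)]
    exact hkey j s
  have hgpos : ∀ j s, (0:ℝ) < ⟪F j s, F j s⟫ := by
    intro j s
    rw [real_inner_self_eq_norm_sq]
    exact pow_pos (hfpos j s) 2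
  -- supremum facts
  set S : ℝ := ⨆ j : Fin k, slOpNorm (M j) with hS_def
  have hbdd : BddAbove (Set.range fun j : Fin k => slOpNorm (M j)) :=
    Set.Finite.bddAbove (Set.finite_range _)
  have hNS : ∀ j, N j ≤ S := fun j => le_ciSup hbdd j
  have hS0 : 0 ≤ S := le_trans (hNpos ⟨0, hk⟩).le (hNS ⟨0, hk⟩)
  -- rewrite H
  have hH' : H = fun s => ∑ j : Fin k, p j * (⟪F j s, F j s⟫ : ℝ) ^ (-α) := by
    rw [hH]
    funext s
    refine Finset.sum_congr rfl fun j _ => ?_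
    congr 1
    rw [real_inner_self_eq_norm_sq, ← Real.rpow_natCast ‖F j s‖ 2,
      ← Real.rpow_mul (norm_nonneg _)]
    congr 1
    push_cast
    ring
  -- derivative computation
  have hderiv : ∀ t : ℝ, HasDerivAt H
      (∑ j : Fin k, p j * ((⟪F j t, slAct (M j) (d t)⟫ + ⟪slAct (M j) (d t), F j t⟫) * (-α)
        * (⟪F j t, F j t⟫ : ℝ) ^ (-α - 1))) t := by
    intro t
    rw [hH']
    apply HasDerivAt.fun_sum
    intro j _
    have hc : HasDerivAt c (d t) t :=
      ((Real.hasDerivAt_cos t).smul_const x).add ((Real.hasDerivAt_sin t).smul_const v)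
    have hFd : HasDerivAt (F j) (slAct (M j) (d t)) t :=
      ((LinearMap.toContinuousLinearMap
        (Matrix.toEuclideanLin ((M j : Matrix (Fin 2) (Fin 2) ℝ)))).hasFDerivAt.comp_hasDerivAt t hc : _)
    have hgd := hFd.inner ℝ hFd
    exact (hgd.rpow_const (Or.inl (ne_of_gt (hgpos j t)))).const_mul (p j)
  constructor
  · exact fun t => (hderiv t).differentiableAt
  · intro t
    rw [(hderiv t).deriv]
    set e : ℝ := 2 * (1 + α) with he_def
    have he0 : (0:ℝ) ≤ 2 * α + 1 := by linarith
    -- per-term bound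
    have hterm : ∀ j : Fin k,
        |p j * ((⟪F j t, slAct (M j) (d t)⟫ + ⟪slAct (M j) (d t), F j t⟫) * (-α)
          * (⟪F j t, F j t⟫ : ℝ) ^ (-α - 1))| ≤ p j * (2 * α * S ^ e) := by
      intro j
      set f : ℝ := ‖F j t‖ with hf_def
      have hfp : 0 < f := hfpos j t
      set G : ℝ := (⟪F j t, F j t⟫ : ℝ) ^ (-α - 1) with hG_def
      have hGpos : 0 < G := Real.rpow_pos_of_pos (hgpos j t) _
      have hA : |(⟪F j t, slAct (M j) (d t)⟫ + ⟪slAct (M j) (d t), F j t⟫ : ℝ)| ≤ 2 * (N j * f) := by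
        have h1 : |(⟪F j t, slAct (M j) (d t)⟫ : ℝ)| ≤ f * N j := by
          calc |(⟪F j t, slAct (M j) (d t)⟫ : ℝ)| ≤ ‖F j t‖ * ‖slAct (M j) (d t)‖ :=
                abs_real_inner_le_norm _ _
            _ ≤ f * N j := by
                have := slAct_le' (M j) (d t)
                rw [hdnorm t, mul_one] at this
                exact mul_le_mul_of_nonneg_left this hfp.le
        have h2 : |(⟪slAct (M j) (d t), F j t⟫ : ℝ)| ≤ f * N j := by
          rw [real_inner_comm]; exact h1
        calc |(⟪F j t, slAct (M j) (d t)⟫ + ⟪slAct (M j) (d t), F j t⟫ : ℝ)|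
            ≤ |(⟪F j t, slAct (M j) (d t)⟫ : ℝ)| + |(⟪slAct (M j) (d t), F j t⟫ : ℝ)| := abs_add_le _ _
          _ ≤ 2 * (N j * f) := by linarith [h1, h2]
      -- G * f ≤ N j ^ (2α+1)
      have hGf : G * f ≤ N j ^ (2 * α + 1) := by
        have hG_eq : G = f ^ (2 * (-α - 1)) := by
          rw [hG_def, real_inner_self_eq_norm_sq, ← hf_def, ← Real.rpow_natCast f 2,
            ← Real.rpow_mul hfp.le]
          norm_num
        have : G * f = (f⁻¹) ^ (2 * α + 1) := by
          rw [hG_eq, Real.inv_rpow hfp.le, ← Real.rpow_neg hfp.le]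
          have h1 : f ^ (2*(-α-1)) * f = f ^ (2*(-α-1)) * f ^ (1:ℝ) := by rw [Real.rpow_one]
          rw [h1, ← Real.rpow_add hfp]
          congr 1
          ring
        rw [this]
        exact Real.rpow_le_rpow (inv_nonneg.mpr hfp.le) (hfinv j t) he0
      have hNe : N j * N j ^ (2 * α + 1) = N j ^ e := by
        nth_rewrite 1 [← Real.rpow_one (N j)]
        rw [← Real.rpow_add (hNpos j), he_def]
        ring_nf
      have hNSe : N j ^ e ≤ S ^ e :=
        Real.rpow_le_rpow (hNpos j).le (hNS j) (by positivity)
      calc |p j * ((⟪F j t, slAct (M j) (d t)⟫ + ⟪slAct (M j) (d t), F j t⟫) * (-α) * G)|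
          = p j * (|(⟪F j t, slAct (M j) (d t)⟫ + ⟪slAct (M j) (d t), F j t⟫ : ℝ)| * α * G) := by
            rw [abs_mul, abs_of_nonneg (hp j), abs_mul, abs_mul, abs_neg,
              abs_of_pos hα0, abs_of_pos hGpos]
        _ ≤ p j * ((2 * (N j * f)) * α * G) := by
            apply mul_le_mul_of_nonneg_left _ (hp j)
            apply mul_le_mul_of_nonneg_right _ hGpos.le
            exact mul_le_mul_of_nonneg_right hA hα0.le
        _ = p j * (2 * α * (N j * (G * f))) := by ring
        _ ≤ p j * (2 * α * (N j * N j ^ (2 * α + 1))) := by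
            apply mul_le_mul_of_nonneg_left _ (hp j)
            apply mul_le_mul_of_nonneg_left _ (by positivity)
            exact mul_le_mul_of_nonneg_left hGf (hNpos j).le
        _ = p j * (2 * α * N j ^ e) := by rw [hNe]
        _ ≤ p j * (2 * α * S ^ e) := by
            apply mul_le_mul_of_nonneg_left _ (hp j)
            exact mul_le_mul_of_nonneg_left hNSe (by positivity)
    calc |∑ j : Fin k, p j * ((⟪F j t, slAct (M j) (d t)⟫ + ⟪slAct (M j) (d t), F j t⟫) * (-α)
            * (⟪F j t, F j t⟫ : ℝ) ^ (-α - 1))|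
        ≤ ∑ j : Fin k, |p j * ((⟪F j t, slAct (M j) (d t)⟫ + ⟪slAct (M j) (d t), F j t⟫) * (-α)
            * (⟪F j t, F j t⟫ : ℝ) ^ (-α - 1))| := Finset.abs_sum_le_sum_abs _ _
      _ ≤ ∑ j : Fin k, p j * (2 * α * S ^ e) := Finset.sum_le_sum fun j _ => hterm j
      _ = 2 * α * S ^ e := by rw [← Finset.sum_mul, hpsum, one_mul]
end
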